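/- Let n ≥ 3 be an integer and set σ = 40n³. Let u, v, w be three pairwise distinct, non-collinear points of ℝ² all of whose coordinates are integers in {0, 1, …, n−1}. Then every point x ∈ ℝ² that is at Euclidean distance at most 2 from the segment [σ·u, σ·v] and at Euclidean distance at most 2 from the segment [σ·u, σ·w] satisfies ‖x − σ·u‖_∞ ≤ 10n² + 2; that is, the margins at distance 2 of the two scaled segments sharing the endpoint σ·u intersect only inside the box of radius 10n² + 2 centered on σ·u. -/

import Mathlib

open Metric Real

private lemma seg_compact {E : Type*} [NormedAddCommGroup E] [NormedSpace ℝ E]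
    (a b : E) : IsCompact (segment ℝ a b) := by
  rw [segment_eq_image]
  exact (isCompact_Icc).image (by continuity)

set_option maxHeartbeats 1000000 in
private lemma key_ineq (N T S a0 a1 b0 b1 e0 e1 : ℝ)
    (hN : 1 ≤ N) (hT : 0 ≤ T) (hS : 0 ≤ S)
    (ha0 : |a0| ≤ N) (ha1 : |a1| ≤ N) (hb0 : |b0| ≤ N) (hb1 : |b1| ≤ N)
    (hD : 1 ≤ |a0 * b1 - a1 * b0|)
    (h1 : (e0 - T * a0) ^ 2 + (e1 - T * a1) ^ 2 ≤ 4)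
    (h2 : (e0 - S * b0) ^ 2 + (e1 - S * b1) ^ 2 ≤ 4) :
    e0 ^ 2 + e1 ^ 2 ≤ (8 * N ^ 2 + 2) ^ 2 := by
  obtain ⟨ha0', ha0''⟩ := abs_le.mp ha0
  obtain ⟨ha1', ha1''⟩ := abs_le.mp ha1
  obtain ⟨hb0', hb0''⟩ := abs_le.mp hb0
  obtain ⟨hb1', hb1''⟩ := abs_le.mp hb1
  have ha : a0 ^ 2 + a1 ^ 2 ≤ 2 * N ^ 2 := by nlinarith
  have hb : b0 ^ 2 + b1 ^ 2 ≤ 2 * N ^ 2 := by nlinarith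
  have hD2 : 1 ≤ (a0 * b1 - a1 * b0) ^ 2 := by
    nlinarith [sq_abs (a0 * b1 - a1 * b0), abs_nonneg (a0 * b1 - a1 * b0)]
  have hA : (T * a0 - S * b0) ^ 2 + (T * a1 - S * b1) ^ 2 ≤ 16 := by
    nlinarith [sq_nonneg ((e0 - T * a0) + (e0 - S * b0)),
      sq_nonneg ((e1 - T * a1) + (e1 - S * b1))]
  have hB : T ^ 2 * (a0 * b1 - a1 * b0) ^ 2 ≤ 16 * (b0 ^ 2 + b1 ^ 2) := by
    nlinarith [sq_nonneg ((T * a0 - S * b0) * b0 + (T * a1 - S * b1) * b1),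
      mul_le_mul_of_nonneg_right hA (by positivity : (0:ℝ) ≤ b0 ^ 2 + b1 ^ 2)]
  have hT2 : T ^ 2 ≤ 32 * N ^ 2 := by
    nlinarith [mul_nonneg (sq_nonneg T)
      (by linarith : (0:ℝ) ≤ (a0 * b1 - a1 * b0) ^ 2 - 1)]
  have hq : (T * a0) ^ 2 + (T * a1) ^ 2 ≤ 64 * N ^ 4 := by
    nlinarith [mul_le_mul hT2 ha (by positivity) (by positivity : (0:ℝ) ≤ 32 * N ^ 2)]
  set p0 := e0 - T * a0 with hp0
  set p1 := e1 - T * a1 with hp1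
  have hcs : (p0 * (T * a0) + p1 * (T * a1)) ^ 2
      ≤ (p0 ^ 2 + p1 ^ 2) * ((T * a0) ^ 2 + (T * a1) ^ 2) := by
    nlinarith [sq_nonneg (p0 * (T * a1) - p1 * (T * a0))]
  have hc2 : (p0 * (T * a0) + p1 * (T * a1)) ^ 2 ≤ 4 * (64 * N ^ 4) := by
    calc (p0 * (T * a0) + p1 * (T * a1)) ^ 2
        ≤ (p0 ^ 2 + p1 ^ 2) * ((T * a0) ^ 2 + (T * a1) ^ 2) := hcs
      _ ≤ 4 * (64 * N ^ 4) := by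
          apply mul_le_mul h1 hq (by positivity) (by norm_num)
  have hc : p0 * (T * a0) + p1 * (T * a1) ≤ 16 * N ^ 2 := by
    nlinarith [sq_nonneg N]
  have he0 : e0 = p0 + T * a0 := by rw [hp0]; ring
  have he1 : e1 = p1 + T * a1 := by rw [hp1]; ring
  rw [he0, he1]
  nlinarith [h1, hq, hc]

private lemma dist_sq_coords (x p : EuclideanSpace ℝ (Fin 2)) :
    dist x p ^ 2 = (x 0 - p 0) ^ 2 + (x 1 - p 1) ^ 2 := by
  rw [EuclideanSpace.dist_eq, Real.sq_sqrt (by positivity)]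
  simp [Fin.sum_univ_two, Real.dist_eq, sq_abs]

private lemma collinear_of_det_zero (u v w : EuclideanSpace ℝ (Fin 2)) (huv : u ≠ v)
    (hD0 : (v 0 - u 0) * (w 1 - u 1) - (v 1 - u 1) * (w 0 - u 0) = 0) :
    Collinear ℝ ({u, v, w} : Set (EuclideanSpace ℝ (Fin 2))) := by
  rw [collinear_iff_exists_forall_eq_smul_vadd]
  refine ⟨u, v - u, ?_⟩
  have hane : v 0 - u 0 ≠ 0 ∨ v 1 - u 1 ≠ 0 := by
    by_contra hcon
    push_neg at hcon
    apply huv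
    ext i
    fin_cases i
    · show u 0 = v 0; linarith [hcon.1]
    · show u 1 = v 1; linarith [hcon.2]
  rintro p (rfl | rfl | rfl)
  · exact ⟨0, by ext i; simp [PiLp.add_apply, PiLp.smul_apply, PiLp.sub_apply]⟩
  · refine ⟨1, ?_⟩
    ext i
    simp [PiLp.add_apply, PiLp.smul_apply, PiLp.sub_apply]
  · rcases hane with h | h
    · refine ⟨(p 0 - u 0) / (v 0 - u 0), ?_⟩
      ext i
      simp only [vadd_eq_add, PiLp.add_apply, PiLp.smul_apply, PiLp.sub_apply,
        smul_eq_mul, Fin.isValue]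
      fin_cases i
      · show p 0 = (p 0 - u 0) / (v 0 - u 0) * (v 0 - u 0) + u 0
        field_simp
        ring
      · show p 1 = (p 0 - u 0) / (v 0 - u 0) * (v 1 - u 1) + u 1
        field_simp
        linear_combination hD0
    · refine ⟨(p 1 - u 1) / (v 1 - u 1), ?_⟩
      ext i
      simp only [vadd_eq_add, PiLp.add_apply, PiLp.smul_apply, PiLp.sub_apply,
        smul_eq_mul, Fin.isValue]
      fin_cases i
      · show p 0 = (p 1 - u 1) / (v 1 - u 1) * (v 0 - u 0) + u 0
        field_simp
        linear_combination -hD0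
      · show p 1 = (p 1 - u 1) / (v 1 - u 1) * (v 1 - u 1) + u 1
        field_simp
        ring

set_option maxHeartbeats 2000000 in
/-- Claim (ii) of Section 5 of the paper: the margins at distance 2 of two
scaled segments sharing the endpoint `σ·u` (with `σ = 40n³`) intersect only
inside the box of radius `10n² + 2` (for the sup norm) centered on `σ·u`. -/
theorem stmt7 (n : ℕ) (hn : 3 ≤ n) (u v w : EuclideanSpace ℝ (Fin 2))
    (hu : ∀ i, ∃ k : ℕ, k < n ∧ u i = k)
    (hv : ∀ i, ∃ k : ℕ, k < n ∧ v i = k)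
    (hw : ∀ i, ∃ k : ℕ, k < n ∧ w i = k)
    (huv : u ≠ v) (huw : u ≠ w) (hvw : v ≠ w)
    (hncol : ¬ Collinear ℝ ({u, v, w} : Set (EuclideanSpace ℝ (Fin 2))))
    (x : EuclideanSpace ℝ (Fin 2))
    (hx1 : Metric.infDist x
      (segment ℝ ((40 * (n : ℝ) ^ 3) • u) ((40 * (n : ℝ) ^ 3) • v)) ≤ 2)
    (hx2 : Metric.infDist x
      (segment ℝ ((40 * (n : ℝ) ^ 3) • u) ((40 * (n : ℝ) ^ 3) • w)) ≤ 2) :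
    max |x 0 - ((40 * (n : ℝ) ^ 3) • u) 0| |x 1 - ((40 * (n : ℝ) ^ 3) • u) 1|
      ≤ 10 * (n : ℝ) ^ 2 + 2 := by
  set σ : ℝ := 40 * (n : ℝ) ^ 3 with hσ
  have hσpos : 0 < σ := by positivity
  obtain ⟨p, hpmem, hpd⟩ := (seg_compact (σ • u) (σ • v)).exists_infDist_eq_dist
    ⟨σ • u, left_mem_segment ℝ _ _⟩ x
  obtain ⟨q, hqmem, hqd⟩ := (seg_compact (σ • u) (σ • w)).exists_infDist_eq_dist
    ⟨σ • u, left_mem_segment ℝ _ _⟩ x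
  have hxp : dist x p ≤ 2 := by rw [← hpd]; exact hx1
  have hxq : dist x q ≤ 2 := by rw [← hqd]; exact hx2
  rw [segment_eq_image] at hpmem hqmem
  obtain ⟨t, ht, hp⟩ := hpmem
  obtain ⟨s, hs, hq⟩ := hqmem
  simp only [Set.mem_Icc] at ht hs
  have hpc : ∀ i, p i = σ * u i + t * σ * (v i - u i) := by
    intro i
    rw [← hp]
    simp only [PiLp.add_apply, PiLp.smul_apply, smul_eq_mul]
    ring
  have hqc : ∀ i, q i = σ * u i + s * σ * (w i - u i) := by
    intro i
    rw [← hq]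
    simp only [PiLp.add_apply, PiLp.smul_apply, smul_eq_mul]
    ring
  obtain ⟨ku0, hku0, hu0⟩ := hu 0
  obtain ⟨ku1, hku1, hu1⟩ := hu 1
  obtain ⟨kv0, hkv0, hv0⟩ := hv 0
  obtain ⟨kv1, hkv1, hv1⟩ := hv 1
  obtain ⟨kw0, hkw0, hw0⟩ := hw 0
  obtain ⟨kw1, hkw1, hw1⟩ := hw 1
  have hnR : (1:ℝ) ≤ n := by exact_mod_cast Nat.one_le_of_lt hn
  have cb : ∀ k : ℕ, k < n → (0:ℝ) ≤ (k:ℝ) ∧ (k:ℝ) ≤ n :=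
    fun k hk => ⟨Nat.cast_nonneg k, by exact_mod_cast hk.le⟩
  have ha0 : |v 0 - u 0| ≤ (n:ℝ) := by
    rw [hu0, hv0, abs_le]
    constructor <;> linarith [(cb _ hku0).1, (cb _ hku0).2, (cb _ hkv0).1, (cb _ hkv0).2]
  have ha1 : |v 1 - u 1| ≤ (n:ℝ) := by
    rw [hu1, hv1, abs_le]
    constructor <;> linarith [(cb _ hku1).1, (cb _ hku1).2, (cb _ hkv1).1, (cb _ hkv1).2]
  have hb0 : |w 0 - u 0| ≤ (n:ℝ) := by
    rw [hu0, hw0, abs_le]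
    constructor <;> linarith [(cb _ hku0).1, (cb _ hku0).2, (cb _ hkw0).1, (cb _ hkw0).2]
  have hb1 : |w 1 - u 1| ≤ (n:ℝ) := by
    rw [hu1, hw1, abs_le]
    constructor <;> linarith [(cb _ hku1).1, (cb _ hku1).2, (cb _ hkw1).1, (cb _ hkw1).2]
  -- the determinant is a nonzero integer, hence has absolute value at least 1
  have hDne : (v 0 - u 0) * (w 1 - u 1) - (v 1 - u 1) * (w 0 - u 0) ≠ 0 :=
    fun hD0 => hncol (collinear_of_det_zero u v w huv hD0)
  have hDint : (v 0 - u 0) * (w 1 - u 1) - (v 1 - u 1) * (w 0 - u 0) =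
      ((((kv0:ℤ) - ku0) * ((kw1:ℤ) - ku1) - ((kv1:ℤ) - ku1) * ((kw0:ℤ) - ku0) : ℤ) : ℝ) := by
    rw [hu0, hu1, hv0, hv1, hw0, hw1]
    push_cast
    ring
  have hD : 1 ≤ |(v 0 - u 0) * (w 1 - u 1) - (v 1 - u 1) * (w 0 - u 0)| := by
    rw [hDint] at hDne ⊢
    have hne : (((kv0:ℤ) - ku0) * ((kw1:ℤ) - ku1) - ((kv1:ℤ) - ku1) * ((kw0:ℤ) - ku0)) ≠ 0 := by
      exact Int.cast_ne_zero.mp hDne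
    rw [← Int.cast_abs]
    calc (1:ℝ) = ((1:ℤ):ℝ) := by norm_num
      _ ≤ _ := Int.cast_le.mpr (Int.one_le_abs hne)
  -- distance conditions in coordinates
  have hd1 : ((x 0 - σ * u 0) - (t * σ) * (v 0 - u 0)) ^ 2
      + ((x 1 - σ * u 1) - (t * σ) * (v 1 - u 1)) ^ 2 ≤ 4 := by
    have h4 : dist x p ^ 2 ≤ 4 := by
      calc dist x p ^ 2 ≤ 2 ^ 2 := pow_le_pow_left₀ dist_nonneg hxp 2
        _ = 4 := by norm_num
    rw [dist_sq_coords, hpc 0, hpc 1] at h4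
    calc ((x 0 - σ * u 0) - (t * σ) * (v 0 - u 0)) ^ 2
          + ((x 1 - σ * u 1) - (t * σ) * (v 1 - u 1)) ^ 2
        = (x 0 - (σ * u 0 + t * σ * (v 0 - u 0))) ^ 2
          + (x 1 - (σ * u 1 + t * σ * (v 1 - u 1))) ^ 2 := by ring
      _ ≤ 4 := h4
  have hd2 : ((x 0 - σ * u 0) - (s * σ) * (w 0 - u 0)) ^ 2
      + ((x 1 - σ * u 1) - (s * σ) * (w 1 - u 1)) ^ 2 ≤ 4 := by
    have h4 : dist x q ^ 2 ≤ 4 := by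
      calc dist x q ^ 2 ≤ 2 ^ 2 := pow_le_pow_left₀ dist_nonneg hxq 2
        _ = 4 := by norm_num
    rw [dist_sq_coords, hqc 0, hqc 1] at h4
    calc ((x 0 - σ * u 0) - (s * σ) * (w 0 - u 0)) ^ 2
          + ((x 1 - σ * u 1) - (s * σ) * (w 1 - u 1)) ^ 2
        = (x 0 - (σ * u 0 + s * σ * (w 0 - u 0))) ^ 2
          + (x 1 - (σ * u 1 + s * σ * (w 1 - u 1))) ^ 2 := by ring
      _ ≤ 4 := h4
  have hkey := key_ineq (n:ℝ) (t * σ) (s * σ) (v 0 - u 0) (v 1 - u 1)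
    (w 0 - u 0) (w 1 - u 1) (x 0 - σ * u 0) (x 1 - σ * u 1) hnR
    (mul_nonneg ht.1 hσpos.le) (mul_nonneg hs.1 hσpos.le)
    ha0 ha1 hb0 hb1 hD hd1 hd2
  -- conclude
  have hsu0 : (σ • u) 0 = σ * u 0 := rfl
  have hsu1 : (σ • u) 1 = σ * u 1 := rfl
  have h0 : |x 0 - (σ • u) 0| ≤ 10 * (n:ℝ) ^ 2 + 2 := by
    rw [hsu0, abs_le]
    constructor <;> nlinarith only [hkey, sq_nonneg (x 1 - σ * u 1), sq_nonneg ((n:ℝ) ^ 2), hnR]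
  have h1 : |x 1 - (σ • u) 1| ≤ 10 * (n:ℝ) ^ 2 + 2 := by
    rw [hsu1, abs_le]
    constructor <;> nlinarith only [hkey, sq_nonneg (x 0 - σ * u 0), sq_nonneg ((n:ℝ) ^ 2), hnR]
  exact max_le h0 h1
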